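/- Assume n ≥ 2. For every proper subset S ⊊ I and every two non-manipulating agents a_s and a_t, the ranks of their most preferred remaining items satisfy |rk_{a_s}(b(a_s,S)) − rk_{a_t}(b(a_t,S))| ≤ rg^max − 1. -/

import Mathlib

/-- Items are `Fin m`; a ranking is a bijection `Fin m ≃ Fin m`
(`rk i` is the rank of item `i`; lower rank = more preferred).
`IsBest rk S b` says that `b` is the item of `I ∖ S` with minimum rank,
i.e. `b = b(a, S)` for an agent with ranking `rk`. -/
def IsBest {m : ℕ} (rk : Fin m ≃ Fin m) (S : Finset (Fin m)) (b : Fin m) : Prop :=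
  b ∉ S ∧ ∀ j ∉ S, rk b ≤ rk j

/-- The ranks (as natural numbers) given to item `i` by the non-manipulators. -/
def nonManipRanks {A : Type*} [Fintype A] [DecidableEq A] {m : ℕ}
    (a₁ : A) (rk : A → Fin m ≃ Fin m) (i : Fin m) : Finset ℕ :=
  (Finset.univ.filter fun a => a ≠ a₁).image fun a => (rk a i : ℕ)

/-- The range of an item: `max_{a ≠ a₁} rk_a(i) − min_{a ≠ a₁} rk_a(i) + 1`. -/
def rg {A : Type*} [Fintype A] [DecidableEq A] {m : ℕ}
    (a₁ : A) (rk : A → Fin m ≃ Fin m) (i : Fin m) : ℕ :=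
  WithBot.unbotD 0 (nonManipRanks a₁ rk i).max - WithTop.untopD 0 (nonManipRanks a₁ rk i).min + 1

/-- `rg^max` : the maximum range of an item. -/
def rgMax {A : Type*} [Fintype A] [DecidableEq A] {m : ℕ}
    (a₁ : A) (rk : A → Fin m ≃ Fin m) : ℕ :=
  Finset.univ.sup fun i : Fin m => rg a₁ rk i

lemma key {A : Type*} [Fintype A] [DecidableEq A] {m : ℕ}
    (a₁ : A) (rk : A → Fin m ≃ Fin m) (i : Fin m)
    (a a' : A) (ha : a ≠ a₁) (ha' : a' ≠ a₁) :
    ((rk a i : ℕ) : ℤ) - ((rk a' i : ℕ) : ℤ) ≤ (rgMax a₁ rk : ℤ) - 1 := by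
  have hmemA : (rk a i : ℕ) ∈ nonManipRanks a₁ rk i := by
    simp [nonManipRanks]; exact ⟨a, ha, rfl⟩
  have hmemB : (rk a' i : ℕ) ∈ nonManipRanks a₁ rk i := by
    simp [nonManipRanks]; exact ⟨a', ha', rfl⟩
  have hne : (nonManipRanks a₁ rk i).Nonempty := ⟨_, hmemA⟩
  have hmax : WithBot.unbotD 0 (nonManipRanks a₁ rk i).max = (nonManipRanks a₁ rk i).max' hne := by
    rw [← Finset.coe_max' hne]; rfl
  have hmin : WithTop.untopD 0 (nonManipRanks a₁ rk i).min = (nonManipRanks a₁ rk i).min' hne := by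
    rw [← Finset.coe_min' hne]; rfl
  have h1 : (rk a i : ℕ) ≤ (nonManipRanks a₁ rk i).max' hne := Finset.le_max' _ _ hmemA
  have h2 : (nonManipRanks a₁ rk i).min' hne ≤ (rk a' i : ℕ) := Finset.min'_le _ _ hmemB
  have h3 : (nonManipRanks a₁ rk i).min' hne ≤ (nonManipRanks a₁ rk i).max' hne :=
    Finset.min'_le _ _ (Finset.max'_mem _ _)
  have hrg : (rg a₁ rk i : ℤ) =
      ((nonManipRanks a₁ rk i).max' hne : ℤ) - ((nonManipRanks a₁ rk i).min' hne : ℤ) + 1 := by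
    rw [rg, hmax, hmin]
    push_cast [Nat.cast_sub h3]
    ring
  have hle : rg a₁ rk i ≤ rgMax a₁ rk := Finset.le_sup (Finset.mem_univ i)
  have : ((rk a i : ℕ) : ℤ) - ((rk a' i : ℕ) : ℤ) ≤ (rg a₁ rk i : ℤ) - 1 := by
    rw [hrg]; omega
  omega

/-- assuming `n ≥ 2`, for every proper subset `S ⊊ I` and all
non-manipulators `aₛ, aₜ`, `|rk_{aₛ}(b(aₛ,S)) − rk_{aₜ}(b(aₜ,S))| ≤ rg^max − 1`. -/
theorem statement7 {A : Type*} [Fintype A] [DecidableEq A] {m : ℕ}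
    (a₁ : A) (rk : A → Fin m ≃ Fin m) (hn : 2 ≤ Fintype.card A)
    (S : Finset (Fin m)) (hS : S ⊂ Finset.univ)
    (as at' : A) (has : as ≠ a₁) (hat : at' ≠ a₁)
    (bs bt : Fin m) (hbs : IsBest (rk as) S bs) (hbt : IsBest (rk at') S bt) :
    |((rk as bs : ℕ) : ℤ) - ((rk at' bt : ℕ) : ℤ)| ≤ (rgMax a₁ rk : ℤ) - 1 := by
  rw [abs_sub_le_iff]
  constructor
  · have h1 : (rk as bs : ℕ) ≤ (rk as bt : ℕ) := hbs.2 bt hbt.1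
    have h2 := key a₁ rk bt as at' has hat
    omega
  · have h1 : (rk at' bt : ℕ) ≤ (rk at' bs : ℕ) := hbt.2 bs hbs.1
    have h2 := key a₁ rk bs at' as hat has
    omega
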